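/- Let ε > 0 and let z₁,…,z_k be linearly independent vectors in ℝᵐ with |z_i| ≤ 1 for all i, whose Gram–Schmidt orthogonalization z₁* = z₁, z₂*, …, z_k* satisfies |z_j*| ≥ ε for all j. Let δ ≥ 0 satisfy δ·(1 + 1/ε)^k ≤ 1/2 and 2δ·(1 + 1/ε)^k < ε/2, and let z₁'',…,z_k'' ∈ ℝᵐ satisfy |z_i''| ≤ δ for all i. Then for every vector z' in the span of the perturbed vectors z₁ − z₁'', …, z_k − z_k'' with |z'| ≤ 1 and every vector w ∈ ℝᵐ, the Euclidean distance from z' + w to the span of z₁,…,z_k is strictly less than |w| + ε/2. -/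

import Mathlib

open scoped RealInnerProductSpace
open Finset

noncomputable abbrev gsAux {m k : ℕ} (z : Fin k → EuclideanSpace ℝ (Fin m)) :
    Fin k → EuclideanSpace ℝ (Fin m) :=
  @InnerProductSpace.gramSchmidt ℝ _ _ _ _ (Fin k) _ _ _ z

lemma gsAux_orth {m k : ℕ} (z : Fin k → EuclideanSpace ℝ (Fin m)) {i j : Fin k} (h : i ≠ j) :
    ⟪gsAux z i, gsAux z j⟫ = 0 :=
  @InnerProductSpace.gramSchmidt_orthogonal ℝ _ _ _ _ (Fin k) _ _ (inferInstanceAs (WellFoundedLT (Fin k))) z i j h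

lemma gsAux_inv_tri {m k : ℕ} (z : Fin k → EuclideanSpace ℝ (Fin m)) {i j : Fin k} (h : i < j) :
    ⟪gsAux z j, z i⟫ = 0 :=
  @InnerProductSpace.gramSchmidt_inv_triangular ℝ _ _ _ _ (Fin k) _ _ (inferInstanceAs (WellFoundedLT (Fin k))) z i j h

lemma gsAux_inner_self {m k : ℕ} (z : Fin k → EuclideanSpace ℝ (Fin m)) (j : Fin k) :
    ⟪gsAux z j, z j⟫ = ‖gsAux z j‖ ^ 2 := by
  conv_lhs => rw [show z j = _ from
    @InnerProductSpace.gramSchmidt_def'' ℝ _ _ _ _ (Fin k) _ _ (inferInstanceAs (WellFoundedLT (Fin k))) z j]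
  rw [inner_add_right, inner_sum, Finset.sum_eq_zero, add_zero]
  · rw [real_inner_self_eq_norm_sq]
  intro i hi
  rw [inner_smul_right, gsAux_orth z (Finset.mem_Iio.1 hi).ne', mul_zero]

lemma coeff_bd {m k : ℕ} {ε : ℝ} (hε : 0 < ε) (z : Fin k → EuclideanSpace ℝ (Fin m))
    (hnorm : ∀ i, ‖z i‖ ≤ 1) (hgs : ∀ j, ε ≤ ‖gsAux z j‖) (c : Fin k → ℝ) :
    ∑ i, |c i| ≤ ((1 + 1 / ε) ^ k - 1) * ‖∑ i, c i • z i‖ := by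
  have hεinv : (0:ℝ) < 1 / ε := by positivity
  set x := ∑ i, c i • z i with hxdef
  have hX : 0 ≤ ‖x‖ := norm_nonneg _
  have aux : ∀ d : ℕ, d ≤ k →
      ∑ i ∈ univ.filter (fun i : Fin k => k - d ≤ (i : ℕ)), |c i|
        ≤ ((1 + 1 / ε) ^ d - 1) * ‖x‖ := by
    intro d
    induction d with
    | zero =>
      intro _
      rw [Finset.filter_false_of_mem, Finset.sum_empty]
      · simp
      · intro i _
        have := i.isLt
        omega
    | succ d ih =>
      intro hdk
      have hd : d ≤ k := Nat.le_of_succ_le hdk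
      have ihS := ih hd
      set t₀ : Fin k := ⟨k - (d + 1), by omega⟩ with ht₀
      have ht₀v : (t₀ : ℕ) = k - (d + 1) := rfl
      set B := univ.filter (fun i : Fin k => k - d ≤ (i : ℕ)) with hB
      have hS0 : 0 ≤ ∑ i ∈ B, |c i| := Finset.sum_nonneg fun i _ => abs_nonneg _
      have hsplit : univ.filter (fun i : Fin k => k - (d + 1) ≤ (i : ℕ)) = insert t₀ B := by
        ext i
        have hik := i.isLt
        simp only [Finset.mem_filter, Finset.mem_insert, Finset.mem_univ, true_and, hB,
          Fin.ext_iff, ht₀v]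
        omega
      have ht₀B : t₀ ∉ B := by
        simp only [hB, Finset.mem_filter, Finset.mem_univ, true_and, ht₀v]
        omega
      rw [hsplit, Finset.sum_insert ht₀B]
      have hgε : ε ≤ ‖gsAux z t₀‖ := hgs t₀
      have hgpos : 0 < ‖gsAux z t₀‖ := lt_of_lt_of_le hε hgε
      have hsum : ⟪gsAux z t₀, x⟫
          = c t₀ * ‖gsAux z t₀‖ ^ 2 + ∑ i ∈ B, c i * ⟪gsAux z t₀, z i⟫ := by
        rw [hxdef, inner_sum]
        simp_rw [real_inner_smul_right]
        have h0 : ∑ i ∈ univ.filter (fun i : Fin k => k - (d + 1) ≤ (i : ℕ)),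
            c i * ⟪gsAux z t₀, z i⟫ = ∑ i : Fin k, c i * ⟪gsAux z t₀, z i⟫ := by
          refine Finset.sum_filter_of_ne fun i _ hne => ?_
          by_contra hlt
          have : i < t₀ := by
            rw [Fin.lt_def, ht₀v]; omega
          rw [gsAux_inv_tri z this, mul_zero] at hne
          exact hne rfl
        rw [← h0, hsplit, Finset.sum_insert ht₀B, gsAux_inner_self]
      have hkey : |c t₀| * ε ≤ ‖x‖ + ∑ i ∈ B, |c i| := by
        have h1 : |c t₀| * ‖gsAux z t₀‖ ^ 2
            ≤ ‖gsAux z t₀‖ * ‖x‖ + ‖gsAux z t₀‖ * ∑ i ∈ B, |c i| := by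
          have heq : c t₀ * ‖gsAux z t₀‖ ^ 2
              = ⟪gsAux z t₀, x⟫ - ∑ i ∈ B, c i * ⟪gsAux z t₀, z i⟫ := by
            rw [hsum]; ring
          calc |c t₀| * ‖gsAux z t₀‖ ^ 2 = |c t₀ * ‖gsAux z t₀‖ ^ 2| := by
                rw [abs_mul, abs_of_nonneg (by positivity : (0:ℝ) ≤ ‖gsAux z t₀‖ ^ 2)]
            _ = |⟪gsAux z t₀, x⟫ - ∑ i ∈ B, c i * ⟪gsAux z t₀, z i⟫| := by rw [heq]
            _ ≤ |⟪gsAux z t₀, x⟫| + |∑ i ∈ B, c i * ⟪gsAux z t₀, z i⟫| := abs_sub _ _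
            _ ≤ ‖gsAux z t₀‖ * ‖x‖ + ∑ i ∈ B, |c i * ⟪gsAux z t₀, z i⟫| :=
                add_le_add (abs_real_inner_le_norm _ x) (Finset.abs_sum_le_sum_abs _ _)
            _ ≤ ‖gsAux z t₀‖ * ‖x‖ + ∑ i ∈ B, |c i| * ‖gsAux z t₀‖ := by
                refine add_le_add (le_refl _) (Finset.sum_le_sum fun i _ => ?_)
                rw [abs_mul]
                refine mul_le_mul_of_nonneg_left ?_ (abs_nonneg _)
                calc |⟪gsAux z t₀, z i⟫| ≤ ‖gsAux z t₀‖ * ‖z i‖ := abs_real_inner_le_norm _ _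
                  _ ≤ ‖gsAux z t₀‖ * 1 := mul_le_mul_of_nonneg_left (hnorm i) hgpos.le
                  _ = ‖gsAux z t₀‖ := mul_one _
            _ = ‖gsAux z t₀‖ * ‖x‖ + ‖gsAux z t₀‖ * ∑ i ∈ B, |c i| := by
                rw [← Finset.sum_mul]; ring
        have h2 : |c t₀| * ‖gsAux z t₀‖ ≤ ‖x‖ + ∑ i ∈ B, |c i| := by
          nlinarith [abs_nonneg (c t₀)]
        calc |c t₀| * ε ≤ |c t₀| * ‖gsAux z t₀‖ :=
              mul_le_mul_of_nonneg_left hgε (abs_nonneg _)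
          _ ≤ ‖x‖ + ∑ i ∈ B, |c i| := h2
      -- arithmetic conclusion
      have hmul : (∑ i ∈ B, |c i|) * (1/ε) ≤ (((1 + 1/ε) ^ d - 1) * ‖x‖) * (1/ε) :=
        mul_le_mul_of_nonneg_right ihS hεinv.le
      have h6' : |c t₀| ≤ ‖x‖ * (1/ε) + (∑ i ∈ B, |c i|) * (1/ε) := by
        have h7 := (le_div_iff₀ hε).2 hkey
        have h8 : (‖x‖ + ∑ i ∈ B, |c i|) / ε = ‖x‖ * (1/ε) + (∑ i ∈ B, |c i|) * (1/ε) := by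
          ring
        linarith [h8 ▸ h7]
      have hgoal_eq : ((1 + 1/ε) ^ (d+1) - 1) * ‖x‖
          = ((1 + 1/ε) ^ d - 1) * ‖x‖ + (((1 + 1/ε) ^ d - 1) * ‖x‖) * (1/ε) + ‖x‖ * (1/ε) := by
        ring
      rw [hgoal_eq]
      linarith
  have h := aux k le_rfl
  rw [Finset.filter_true_of_mem (fun i _ => by omega)] at h
  exact h

/-- Under the Gram–Schmidt lower bound `|z_j*| ≥ ε` and smallness conditions on `δ`,
every unit-bounded vector `z'` in the span of the perturbed vectors `z_i − z_i''`
satisfies: for all `w`, the distance from `z' + w` to the span of `z₁,…,z_k` is less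
than `|w| + ε/2`. -/
theorem stmt13 {m k : ℕ} (ε : ℝ) (hε : 0 < ε) (z : Fin k → EuclideanSpace ℝ (Fin m))
    (hli : LinearIndependent ℝ z) (hnorm : ∀ i, ‖z i‖ ≤ 1)
    (hgs : ∀ j : Fin k,
      ε ≤ ‖@InnerProductSpace.gramSchmidt ℝ _ _ _ _ (Fin k) _ _ (inferInstanceAs (WellFoundedLT (Fin k))) z j‖)
    (δ : ℝ) (hδ0 : 0 ≤ δ) (hδ1 : δ * (1 + 1 / ε) ^ k ≤ 1 / 2)
    (hδ2 : 2 * δ * (1 + 1 / ε) ^ k < ε / 2)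
    (z'' : Fin k → EuclideanSpace ℝ (Fin m)) (hz'' : ∀ i, ‖z'' i‖ ≤ δ) :
    ∀ z' ∈ Submodule.span ℝ (Set.range fun i => z i - z'' i), ‖z'‖ ≤ 1 →
      ∀ w : EuclideanSpace ℝ (Fin m),
        Metric.infDist (z' + w) (Submodule.span ℝ (Set.range z) : Set (EuclideanSpace ℝ (Fin m)))
          < ‖w‖ + ε / 2 := by
  intro z' hz' hz'1 w
  obtain ⟨c, hc⟩ := (Submodule.mem_span_range_iff_exists_fun ℝ).1 hz'
  set y : EuclideanSpace ℝ (Fin m) := ∑ i, c i • z i with hy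
  set u : EuclideanSpace ℝ (Fin m) := ∑ i, c i • z'' i with hu
  have hyu : z' = y - u := by
    rw [← hc, hy, hu, ← Finset.sum_sub_distrib]
    exact Finset.sum_congr rfl fun i _ => (smul_sub _ _ _)
  have hS0 : (0:ℝ) ≤ ∑ i, |c i| := Finset.sum_nonneg fun i _ => abs_nonneg _
  have hunorm : ‖u‖ ≤ δ * ∑ i, |c i| := by
    calc ‖u‖ ≤ ∑ i, ‖c i • z'' i‖ := norm_sum_le _ _
      _ ≤ ∑ i, |c i| * δ := by
          refine Finset.sum_le_sum fun i _ => ?_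
          rw [norm_smul, Real.norm_eq_abs]
          exact mul_le_mul_of_nonneg_left (hz'' i) (abs_nonneg _)
      _ = δ * ∑ i, |c i| := by rw [← Finset.sum_mul]; ring
  have hynorm : ‖y‖ ≤ 1 + δ * ∑ i, |c i| := by
    have hyz : y = z' + u := by rw [hyu]; abel
    rw [hyz]
    calc ‖z' + u‖ ≤ ‖z'‖ + ‖u‖ := norm_add_le _ _
      _ ≤ 1 + δ * ∑ i, |c i| := add_le_add hz'1 hunorm
  have hC0 : (0:ℝ) ≤ (1 + 1 / ε) ^ k - 1 := by
    have h1 : (1:ℝ) ≤ 1 + 1 / ε := by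
      have : (0:ℝ) < 1 / ε := by positivity
      linarith
    have := one_le_pow₀ h1 (n := k)
    linarith
  have hCP : ((1 + 1 / ε) ^ k - 1 : ℝ) ≤ (1 + 1 / ε) ^ k := by linarith
  have hcoeff : ∑ i, |c i| ≤ ((1 + 1 / ε) ^ k - 1) * ‖y‖ := coeff_bd hε z hnorm hgs c
  have hS2C : ∑ i, |c i| ≤ 2 * ((1 + 1 / ε) ^ k - 1) := by
    have h1 : ∑ i, |c i| ≤ ((1 + 1 / ε) ^ k - 1) * (1 + δ * ∑ i, |c i|) :=
      le_trans hcoeff (mul_le_mul_of_nonneg_left hynorm hC0)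
    have h3 : ((1 + 1 / ε) ^ k - 1) * (1 + δ * ∑ i, |c i|)
        = ((1 + 1 / ε) ^ k - 1) + ((1 + 1 / ε) ^ k - 1) * δ * ∑ i, |c i| := by ring
    have h2 : ((1 + 1 / ε) ^ k - 1) * δ ≤ 1 / 2 := by
      have := mul_le_mul_of_nonneg_right hCP hδ0
      calc ((1 + 1 / ε) ^ k - 1) * δ ≤ (1 + 1 / ε) ^ k * δ := this
        _ = δ * (1 + 1 / ε) ^ k := mul_comm _ _
        _ ≤ 1 / 2 := hδ1
    have h4 : ((1 + 1 / ε) ^ k - 1) * δ * ∑ i, |c i| ≤ 1 / 2 * ∑ i, |c i| :=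
      mul_le_mul_of_nonneg_right h2 hS0
    have h1' := h1.trans_eq h3
    linarith
  have hδSlt : δ * ∑ i, |c i| < ε / 2 := by
    have h5 : δ * ∑ i, |c i| ≤ δ * (2 * ((1 + 1 / ε) ^ k - 1)) :=
      mul_le_mul_of_nonneg_left hS2C hδ0
    have h6 : δ * (2 * ((1 + 1 / ε) ^ k - 1)) ≤ 2 * δ * (1 + 1 / ε) ^ k := by nlinarith
    linarith
  have hymem : y ∈ (Submodule.span ℝ (Set.range z) : Set (EuclideanSpace ℝ (Fin m))) :=
    Submodule.sum_mem _ fun i _ =>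
      Submodule.smul_mem _ _ (Submodule.subset_span (Set.mem_range_self i))
  calc Metric.infDist (z' + w) (Submodule.span ℝ (Set.range z) : Set (EuclideanSpace ℝ (Fin m)))
      ≤ dist (z' + w) y := Metric.infDist_le_dist_of_mem hymem
    _ = ‖w - u‖ := by rw [dist_eq_norm, hyu]; congr 1; abel
    _ ≤ ‖w‖ + ‖u‖ := norm_sub_le _ _
    _ ≤ ‖w‖ + δ * ∑ i, |c i| := add_le_add (le_refl _) hunorm
    _ < ‖w‖ + ε / 2 := add_lt_add_of_le_of_lt (le_refl _) hδSlt
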